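/- Let (X,d) be a nonempty finite metric space and let f : X → X satisfy d(f x, f y) < d(x, y) for all x, y ∈ X with x ≠ y. Then f has a unique fixed point x', and there exists n ∈ ℕ such that the n-fold iterate f^[n] sends every point of X to x' (i.e., f^[n](X) = {x'}). -/

import Mathlib

/-- If `f` strictly decreases distances on a nonempty finite metric space, then `f`
has a unique fixed point `x'`, and some iterate `f^[n]` sends every point to `x'`. -/
theorem stmt0 {X : Type*} [MetricSpace X] [Fintype X] [Nonempty X]
    (f : X → X) (h : ∀ x y : X, x ≠ y → dist (f x) (f y) < dist x y) :
    ∃! x' : X, f x' = x' ∧ ∃ n : ℕ, ∀ x : X, f^[n] x = x' := by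
  classical
  obtain ⟨a, -, ha⟩ := Finset.exists_min_image Finset.univ (fun x => dist x (f x))
    ⟨Classical.arbitrary X, Finset.mem_univ _⟩
  have hfix : f a = a := by
    by_contra hne
    have h1 := h a (f a) (fun he => hne he.symm)
    have h2 := ha (f a) (Finset.mem_univ _)
    linarith
  have hdec : ∀ z, z ≠ a → dist (f z) a < dist z a := by
    intro z hz
    have := h z a hz
    rwa [hfix] at this
  have hle : ∀ z, dist (f z) a ≤ dist z a := by
    intro z
    by_cases hz : z = a
    · subst hz; simp [hfix]
    · exact (hdec z hz).le
  have hlek : ∀ (k : ℕ) (z : X), dist (f^[k] z) a ≤ dist z a := by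
    intro k
    induction k with
    | zero => simp
    | succ n ih =>
      intro z
      rw [Function.iterate_succ_apply']
      exact le_trans (hle _) (ih z)
  have main : ∀ x : X, f^[Fintype.card X] x = a := by
    intro x
    -- pigeonhole: some repeat among f^[i] x for i ≤ card X
    have hcard : Fintype.card X < Fintype.card (Fin (Fintype.card X + 1)) := by simp
    obtain ⟨i, j, hij, heq⟩ := Fintype.exists_ne_map_eq_of_card_lt
      (fun i : Fin (Fintype.card X + 1) => f^[(i : ℕ)] x) hcard
    wlog hlt : (i : ℕ) < (j : ℕ) generalizing i j
    · exact this j i hij.symm heq.symm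
        (lt_of_le_of_ne (not_lt.mp hlt) (fun he => hij (Fin.ext he.symm)))
    set y := f^[(i : ℕ)] x with hy
    have hm : f^[(j : ℕ) - (i : ℕ)] y = y := by
      have : (j : ℕ) = ((j : ℕ) - (i : ℕ)) + (i : ℕ) := by omega
      rw [hy, ← Function.iterate_add_apply, ← this, ← heq]
    have hya : y = a := by
      by_contra hne
      have hpos : 1 ≤ (j : ℕ) - (i : ℕ) := by omega
      have : dist (f^[(j : ℕ) - (i : ℕ)] y) a < dist y a := by
        calc dist (f^[(j : ℕ) - (i : ℕ)] y) a
            = dist (f^[(j : ℕ) - (i : ℕ) - 1] (f y)) a := by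
              rw [← Function.iterate_succ_apply]
              congr 2
              omega
          _ ≤ dist (f y) a := hlek _ _
          _ < dist y a := hdec y hne
      rw [hm] at this
      exact lt_irrefl _ this
    have hia : f^[(i : ℕ)] x = a := hya
    have : f^[Fintype.card X] x = f^[Fintype.card X - (i : ℕ)] (f^[(i : ℕ)] x) := by
      rw [← Function.iterate_add_apply]
      congr 1
      have := i.isLt
      omega
    rw [this, hia, Function.iterate_fixed hfix]
  refine ⟨a, ⟨hfix, Fintype.card X, main⟩, ?_⟩
  rintro y ⟨hyfix, n, hn⟩
  have := hn a
  rw [Function.iterate_fixed hfix] at this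
  exact this.symm
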